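/- If a tripartite state ρ on H_1 ⊗ H_2 ⊗ H_3 is semi-separable across the 1|23 cut, i.e. ρ = Σ_i p_i ρ_1^i ⊗ ρ_{23}^i, then ρ_1 ⊗ I_{23} − ρ_{12} ⊗ I_3 − ρ_{13} ⊗ I_2 + ρ ≥ 0. -/

import Mathlib

open ComplexOrder Kronecker

section Helpers

open Matrix

variable {n m : Type*} [Fintype n] [Fintype m] [DecidableEq n] [DecidableEq m]

/-- The "superoperator" matrix whose Gram matrix is 4 times the matrix
`(tr u u†) I − (u u†)₁ ⊗ I − I ⊗ (u u†)₂ + u u†` for the (unnormalized) pure state `u`. -/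
def Amat (u : n × m → ℂ) : Matrix ((n × m) × (n × m)) (n × m) ℂ :=
  Matrix.of fun X y =>
    (if y = X.1 then star (u X.2) else 0)
  - (if y = (X.2.1, X.1.2) then star (u (X.1.1, X.2.2)) else 0)
  - (if y = (X.1.1, X.2.2) then star (u (X.2.1, X.1.2)) else 0)
  + (if y = X.2 then star (u X.1) else 0)

theorem Amat_mul (u : n × m → ℂ) (P Q : n × m) :
    ((Amat u)ᴴ * (Amat u)) P Q =
      4 * ((∑ R : n × m, star (u R) * u R) * (if P = Q then 1 else 0)
        - (∑ c : m, star (u (P.1, c)) * u (Q.1, c)) * (if P.2 = Q.2 then 1 else 0)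
        - (∑ b : n, star (u (b, P.2)) * u (b, Q.2)) * (if P.1 = Q.1 then 1 else 0)
        + star (u P) * u Q) := by
  obtain ⟨p1, p2⟩ := P
  obtain ⟨q1, q2⟩ := Q
  simp only [Matrix.mul_apply, Matrix.conjTranspose_apply, Amat, Matrix.of_apply,
    star_add, star_sub, apply_ite (star : ℂ → ℂ), star_star, star_zero, Prod.mk.injEq,
    Prod.ext_iff]
  simp only [Fintype.sum_prod_type]
  simp only [add_mul, sub_mul, mul_add, mul_sub, ite_mul, mul_ite, zero_mul, mul_zero,
    Finset.sum_add_distrib, Finset.sum_sub_distrib, ite_and]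
  simp only [Finset.sum_ite_eq, Finset.sum_ite_eq', Finset.mem_univ, if_true,
    Finset.sum_ite_irrel, Finset.sum_const_zero]
  by_cases h1 : p1 = q1 <;> by_cases h2 : p2 = q2
  · subst h1; subst h2
    simp only [if_true, Finset.sum_ite_eq, Finset.sum_ite_eq',
      Finset.mem_univ, Finset.sum_ite_irrel, Finset.sum_const_zero,
      Finset.sum_sub_distrib, Finset.sum_add_distrib]
    simp only [mul_comm]
    rw [Finset.sum_comm]
    ring
  · subst h1
    simp only [h2, if_true, if_false, Finset.sum_ite_eq, Finset.sum_ite_eq',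
      Finset.mem_univ, Finset.sum_ite_irrel, Finset.sum_const_zero,
      Finset.sum_sub_distrib, Finset.sum_add_distrib]
    simp only [mul_comm]
    ring
  · subst h2
    simp only [h1, if_true, if_false, Finset.sum_ite_eq, Finset.sum_ite_eq',
      Finset.mem_univ, Finset.sum_ite_irrel, Finset.sum_const_zero,
      Finset.sum_sub_distrib, Finset.sum_add_distrib]
    simp only [mul_comm]
    ring
  · simp only [h1, h2, if_false, Finset.sum_ite_eq, Finset.sum_ite_eq',
      Finset.mem_univ, if_true, Finset.sum_ite_irrel, Finset.sum_const_zero,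
      Finset.sum_sub_distrib, Finset.sum_add_distrib]
    ring

/-- `Λ⁽²⁾(τ) = (tr τ) I − τ₁ ⊗ I − I ⊗ τ₂ + τ`. -/
noncomputable def Nmat (τ : Matrix (n × m) (n × m) ℂ) : Matrix (n × m) (n × m) ℂ :=
  Matrix.of fun P Q =>
    τ.trace * (if P = Q then 1 else 0)
    - (∑ c : m, τ (P.1, c) (Q.1, c)) * (if P.2 = Q.2 then 1 else 0)
    - (∑ b : n, τ (b, P.2) (b, Q.2)) * (if P.1 = Q.1 then 1 else 0)
    + τ P Q

lemma psd_real_smul {N : Type*} [Fintype N] {A : Matrix N N ℂ} (hA : A.PosSemidef)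
    {r : ℝ} (hr : 0 ≤ r) : ((r : ℂ) • A).PosSemidef := by
  refine ⟨?_, fun x => ?_⟩
  · unfold Matrix.IsHermitian
    rw [Matrix.conjTranspose_smul, hA.1.eq]
    simp
  · exact (hA.smul (a := (r : ℂ)) (by exact_mod_cast Complex.zero_le_real.mpr hr)).2 x

lemma psd_sum {N ι : Type*} [Fintype N] (s : Finset ι) (f : ι → Matrix N N ℂ)
    (h : ∀ i ∈ s, (f i).PosSemidef) : (∑ i ∈ s, f i).PosSemidef :=
  Finset.sum_induction f _ (fun _ _ ha hb => ha.add hb) Matrix.PosSemidef.zero h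

lemma conjTranspose_kron {l p q r : Type*} (A : Matrix l p ℂ) (B : Matrix q r ℂ) :
    (A ⊗ₖ B)ᴴ = Aᴴ ⊗ₖ Bᴴ := by
  ext ⟨i, j⟩ ⟨k, l'⟩
  simp [Matrix.conjTranspose_apply, Matrix.kroneckerMap_apply, star_mul']

lemma psd_kron {N M : Type*} [Fintype N] [Fintype M] [DecidableEq N] [DecidableEq M]
    {A : Matrix N N ℂ} {B : Matrix M M ℂ} (hA : A.PosSemidef) (hB : B.PosSemidef) :
    (A ⊗ₖ B).PosSemidef := by
  obtain ⟨C, hC⟩ := (by open MatrixOrder in exact CStarAlgebra.nonneg_iff_eq_star_mul_self.mp hA.nonneg :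
    ∃ C : Matrix N N ℂ, A = Cᴴ * C)
  obtain ⟨D, hD⟩ := (by open MatrixOrder in exact CStarAlgebra.nonneg_iff_eq_star_mul_self.mp hB.nonneg :
    ∃ D : Matrix M M ℂ, B = Dᴴ * D)
  rw [hC, hD, Matrix.mul_kronecker_mul, ← conjTranspose_kron]
  exact Matrix.posSemidef_conjTranspose_mul_self _

lemma Nmat_psd {τ : Matrix (n × m) (n × m) ℂ} (hτ : τ.PosSemidef) : (Nmat τ).PosSemidef := by
  obtain ⟨B, hB⟩ := (by open MatrixOrder in exact CStarAlgebra.nonneg_iff_eq_star_mul_self.mp hτ.nonneg :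
    ∃ B : Matrix (n × m) (n × m) ℂ, τ = Bᴴ * B)
  have key : Nmat τ = ∑ k : n × m,
      (((1:ℝ)/4 : ℝ) : ℂ) • ((Amat (fun P => B k P))ᴴ * (Amat (fun P => B k P))) := by
    ext P Q
    have hr : ∀ k : n × m,
        ((((1:ℝ)/4 : ℝ) : ℂ) • ((Amat (fun P => B k P))ᴴ * (Amat (fun P => B k P)))) P Q
        = (∑ R : n × m, star (B k R) * B k R) * (if P = Q then 1 else 0)
          - (∑ c : m, star (B k (P.1, c)) * B k (Q.1, c)) * (if P.2 = Q.2 then 1 else 0)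
          - (∑ b : n, star (B k (b, P.2)) * B k (b, Q.2)) * (if P.1 = Q.1 then 1 else 0)
          + star (B k P) * B k Q := by
      intro k
      rw [Matrix.smul_apply, Amat_mul, smul_eq_mul]
      push_cast
      ring
    rw [Matrix.sum_apply]
    simp only [hr]
    simp only [Finset.sum_sub_distrib, Finset.sum_add_distrib, ← Finset.sum_mul]
    simp only [Nmat, Matrix.of_apply, hB, Matrix.mul_apply, Matrix.conjTranspose_apply,
      Matrix.trace, Matrix.diag]
    rw [show (∑ x : n × m, ∑ k : n × m, star (B k x) * B k x)
        = ∑ k : n × m, ∑ x : n × m, star (B k x) * B k x from Finset.sum_comm,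
      show (∑ c : m, ∑ k : n × m, star (B k (P.1, c)) * B k (Q.1, c))
        = ∑ k : n × m, ∑ c : m, star (B k (P.1, c)) * B k (Q.1, c) from Finset.sum_comm,
      show (∑ b : n, ∑ k : n × m, star (B k (b, P.2)) * B k (b, Q.2))
        = ∑ k : n × m, ∑ b : n, star (B k (b, P.2)) * B k (b, Q.2) from Finset.sum_comm]
  rw [key]
  exact psd_sum _ _ fun k _ =>
    psd_real_smul (Matrix.posSemidef_conjTranspose_mul_self _) (by norm_num)

end Helpers

/-- If a tripartite state `ρ` on `H₁ ⊗ H₂ ⊗ H₃` is semi-separable across the `1|23` cut,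
i.e. `ρ = Σ_i p_i ρ₁ⁱ ⊗ ρ₂₃ⁱ`, then
`ρ₁ ⊗ I₂₃ − ρ₁₂ ⊗ I₃ − ρ₁₃ ⊗ I₂ + ρ ≥ 0`. -/
theorem semiseparable_tripartite_criterion (d₁ d₂ d₃ : ℕ)
    (ρ : Matrix (Fin d₁ × Fin d₂ × Fin d₃) (Fin d₁ × Fin d₂ × Fin d₃) ℂ)
    (hsep : ∃ (k : ℕ) (p : Fin k → ℝ)
        (σ : Fin k → Matrix (Fin d₁) (Fin d₁) ℂ)
        (τ : Fin k → Matrix (Fin d₂ × Fin d₃) (Fin d₂ × Fin d₃) ℂ),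
      (∀ i, 0 ≤ p i) ∧ (∑ i, p i = 1) ∧
      (∀ i, (σ i).PosSemidef ∧ (σ i).trace = 1) ∧
      (∀ i, (τ i).PosSemidef ∧ (τ i).trace = 1) ∧
      ρ = ∑ i, ((p i : ℂ)) • (σ i ⊗ₖ τ i)) :
    -- the reduced states `ρ₁ = Tr₂₃ ρ`, `ρ₁₂ = Tr₃ ρ`, `ρ₁₃ = Tr₂ ρ`
    let ρ₁ : Matrix (Fin d₁) (Fin d₁) ℂ :=
      Matrix.of fun x y => ∑ z : Fin d₂ × Fin d₃, ρ (x, z) (y, z)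
    let ρ₁₂ : Matrix (Fin d₁ × Fin d₂) (Fin d₁ × Fin d₂) ℂ :=
      Matrix.of fun x y => ∑ z : Fin d₃, ρ (x.1, x.2, z) (y.1, y.2, z)
    let ρ₁₃ : Matrix (Fin d₁ × Fin d₃) (Fin d₁ × Fin d₃) ℂ :=
      Matrix.of fun x y => ∑ z : Fin d₂, ρ (x.1, z, x.2) (y.1, z, y.2)
    -- `ρ₁ ⊗ I₂₃ − ρ₁₂ ⊗ I₃ − ρ₁₃ ⊗ I₂ + ρ`, written entrywise with explicit padding
    (Matrix.of fun x y : Fin d₁ × Fin d₂ × Fin d₃ =>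
        ρ₁ x.1 y.1 * (if x.2 = y.2 then 1 else 0) -
        ρ₁₂ (x.1, x.2.1) (y.1, y.2.1) * (if x.2.2 = y.2.2 then 1 else 0) -
        ρ₁₃ (x.1, x.2.2) (y.1, y.2.2) * (if x.2.1 = y.2.1 then 1 else 0) +
        ρ x y).PosSemidef := by
  intro ρ₁ ρ₁₂ ρ₁₃
  obtain ⟨k, p, σ, τ, hp, -, hσ, hτ, hρ⟩ := hsep
  have key : (Matrix.of fun x y : Fin d₁ × Fin d₂ × Fin d₃ =>
        ρ₁ x.1 y.1 * (if x.2 = y.2 then 1 else 0) -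
        ρ₁₂ (x.1, x.2.1) (y.1, y.2.1) * (if x.2.2 = y.2.2 then 1 else 0) -
        ρ₁₃ (x.1, x.2.2) (y.1, y.2.2) * (if x.2.1 = y.2.1 then 1 else 0) +
        ρ x y) = ∑ i, ((p i : ℂ)) • (σ i ⊗ₖ Nmat (τ i)) := by
    ext x y
    simp only [Matrix.of_apply, ρ₁, ρ₁₂, ρ₁₃, hρ, Matrix.sum_apply, Matrix.smul_apply,
      Matrix.kroneckerMap_apply, smul_eq_mul, Nmat, Matrix.trace, Matrix.diag]
    rw [show (∑ z : Fin d₂ × Fin d₃, ∑ i : Fin k, (p i : ℂ) * (σ i x.1 y.1 * τ i z z))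
        = ∑ i : Fin k, ∑ z : Fin d₂ × Fin d₃, (p i : ℂ) * (σ i x.1 y.1 * τ i z z) from Finset.sum_comm,
      show (∑ z : Fin d₃, ∑ i : Fin k, (p i : ℂ) * (σ i x.1 y.1 * τ i (x.2.1, z) (y.2.1, z)))
        = ∑ i : Fin k, ∑ z : Fin d₃, (p i : ℂ) * (σ i x.1 y.1 * τ i (x.2.1, z) (y.2.1, z)) from
          Finset.sum_comm,
      show (∑ z : Fin d₂, ∑ i : Fin k, (p i : ℂ) * (σ i x.1 y.1 * τ i (z, x.2.2) (z, y.2.2)))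
        = ∑ i : Fin k, ∑ z : Fin d₂, (p i : ℂ) * (σ i x.1 y.1 * τ i (z, x.2.2) (z, y.2.2)) from
          Finset.sum_comm]
    simp only [Finset.sum_mul, ← Finset.sum_sub_distrib, ← Finset.sum_add_distrib]
    refine Finset.sum_congr rfl fun i _ => ?_
    simp only [mul_assoc, ← Finset.mul_sum]
    ring
  rw [key]
  exact psd_sum _ _ fun i _ => psd_real_smul (psd_kron (hσ i).1 (Nmat_psd (hτ i).1)) (hp i)
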